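/- Let G be a finitely generated group and let K ≤ H be subgroups of G of finite index. Then (d(K) - 1)·[G : H] ≤ (d(H) - 1)·[G : K], where the inequality is between integers. -/

import Mathlib

open Subgroup

section Schreier

variable {G : Type*} [Group G]

/-- Saturation construction: build a partial Schreier transversal with a depth function. -/
theorem schreier_build (H : Subgroup G) {S : Finset G}
    (hS : Subgroup.closure (S : Set G) = ⊤) (k : ℕ) :
    ∃ (A : Finset G) (dep : G → ℕ),
      (1 : G) ∈ A ∧
      (∀ a ∈ A, ∀ b ∈ A, a * b⁻¹ ∈ H → a = b) ∧
      (∀ a ∈ A, a ≠ 1 → ∃ a' ∈ A, dep a' < dep a ∧ ∃ s ∈ S, (a = a' * s ∨ a' = a * s)) ∧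
      ((∀ g : G, ∃ a ∈ A, g * a⁻¹ ∈ H) ∨ k ≤ A.card) := by
  classical
  induction k with
  | zero =>
    refine ⟨{1}, fun _ => 0, Finset.mem_singleton_self 1, ?_, ?_, Or.inr (Nat.zero_le _)⟩
    · intro a ha b hb _
      rw [Finset.mem_singleton] at ha hb; rw [ha, hb]
    · intro a ha ha1
      exact absurd (Finset.mem_singleton.mp ha) ha1
  | succ k ih =>
    obtain ⟨A, dep, h1, h2, h3, h4⟩ := ih
    by_cases hcov : ∀ g : G, ∃ a ∈ A, g * a⁻¹ ∈ H
    · exact ⟨A, dep, h1, h2, h3, Or.inl hcov⟩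
    have hk : k ≤ A.card := h4.resolve_left hcov
    push_neg at hcov
    obtain ⟨g₀, hg₀⟩ := hcov
    -- find a ∈ A, s ∈ S with a*s or a*s⁻¹ uncovered
    have hext : ∃ a ∈ A, ∃ s ∈ S,
        (∀ b ∈ A, ¬ (a * s) * b⁻¹ ∈ H) ∨ (∀ b ∈ A, ¬ (a * s⁻¹) * b⁻¹ ∈ H) := by
      by_contra hcon
      push_neg at hcon
      have hcl : ∀ g : G, ∃ a ∈ A, g * a⁻¹ ∈ H := by
        intro g
        have hg : g ∈ Subgroup.closure (S : Set G) := hS ▸ Subgroup.mem_top g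
        refine Subgroup.closure_induction_right ?_ ?_ ?_ hg
        · exact ⟨1, h1, by simpa using H.one_mem⟩
        · rintro x hx s hs ⟨a, ha, hxa⟩
          obtain ⟨⟨b, hb, hab⟩, -⟩ := hcon a ha s hs
          refine ⟨b, hb, ?_⟩
          have : x * s * b⁻¹ = (x * a⁻¹) * (a * s * b⁻¹) := by group
          rw [this]; exact H.mul_mem hxa hab
        · rintro x hx s hs ⟨a, ha, hxa⟩
          obtain ⟨-, ⟨b, hb, hab⟩⟩ := hcon a ha s hs
          refine ⟨b, hb, ?_⟩
          have : x * s⁻¹ * b⁻¹ = (x * a⁻¹) * (a * s⁻¹ * b⁻¹) := by group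
          rw [this]; exact H.mul_mem hxa hab
      obtain ⟨a, ha, hga⟩ := hcl g₀
      exact hg₀ a ha hga
    obtain ⟨a, ha, s, hs, hcase⟩ := hext
    -- the new element r
    obtain ⟨r, hrunc, hredge⟩ :
        ∃ r : G, (∀ b ∈ A, ¬ r * b⁻¹ ∈ H) ∧ (r = a * s ∨ a = r * s) := by
      rcases hcase with h | h
      · exact ⟨a * s, h, Or.inl rfl⟩
      · exact ⟨a * s⁻¹, h, Or.inr (by group)⟩
    have hrA : r ∉ A := fun hr => hrunc r hr (by simpa using H.one_mem)
    have hr1 : r ≠ 1 := fun hr => hrunc 1 h1 (by simp [hr, H.one_mem])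
    refine ⟨insert r A, fun x => if x = r then A.sup dep + 1 else dep x, ?_, ?_, ?_, ?_⟩
    · exact Finset.mem_insert_of_mem h1
    · intro x hx y hy hxy
      rcases Finset.mem_insert.mp hx with hx' | hx'
      · rcases Finset.mem_insert.mp hy with hy' | hy'
        · rw [hx', hy']
        · exact absurd (hx' ▸ hxy) (hrunc y hy')
      · rcases Finset.mem_insert.mp hy with hy' | hy'
        · refine absurd ?_ (hrunc x hx')
          have hyx : y * x⁻¹ ∈ H := by simpa using H.inv_mem hxy
          exact hy' ▸ hyx
        · exact h2 x hx' y hy' hxy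
    · intro x hx hx1
      rcases Finset.mem_insert.mp hx with rfl | hx
      · refine ⟨a, Finset.mem_insert_of_mem ha, ?_, s, hs, hredge⟩
        have haR : a ≠ x := fun h => hrA (h ▸ ha)
        simp only [if_pos rfl, if_neg haR]
        exact Nat.lt_succ_of_le (Finset.le_sup ha)
      · obtain ⟨a', ha', hda, hedge⟩ := h3 x hx hx1
        have ha'r : a' ≠ r := fun h => hrA (h ▸ ha')
        have hxr : x ≠ r := fun h => hrA (h ▸ hx)
        refine ⟨a', Finset.mem_insert_of_mem ha', ?_, hedge⟩
        simp only [if_neg ha'r, if_neg hxr]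
        exact hda
    · right
      rw [Finset.card_insert_of_notMem hrA]
      omega

/-- The strong form of Schreier's lemma: a finite-index subgroup `H` of a group generated
by `d` elements is generated by at most `[G:H]·d - [G:H] + 1` elements. -/
theorem strong_schreier (H : Subgroup G) [H.FiniteIndex] {S : Finset G}
    (hS : Subgroup.closure (S : Set G) = ⊤) :
    ∃ T : Finset ↥H, T.card + H.index ≤ H.index * S.card + 1 ∧
      Subgroup.closure (T : Set ↥H) = ⊤ := by
  classical
  letI := H.fintypeQuotientOfFiniteIndex
  letI : Fintype (Quotient (QuotientGroup.rightRel H)) :=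
    Fintype.ofEquiv _ (QuotientGroup.quotientRightRelEquivQuotientLeftRel H).symm
  -- any coset-injective finset has card ≤ index
  have hbound : ∀ A : Finset G, (∀ a ∈ A, ∀ b ∈ A, a * b⁻¹ ∈ H → a = b) →
      A.card ≤ H.index := by
    intro A h2
    have hinj : Set.InjOn (fun a : G => (Quotient.mk'' a : Quotient (QuotientGroup.rightRel H)))
        ↑A := by
      intro x hx y hy hxy
      exact h2 x hx y hy (QuotientGroup.rightRel_apply.mp (Quotient.exact' hxy.symm))
    calc A.card = (A.image (fun a : G => (Quotient.mk'' a :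
          Quotient (QuotientGroup.rightRel H)))).card := (Finset.card_image_of_injOn hinj).symm
      _ ≤ Fintype.card (Quotient (QuotientGroup.rightRel H)) := Finset.card_le_univ _
      _ = Fintype.card (G ⧸ H) := QuotientGroup.card_quotient_rightRel H
      _ = H.index := by rw [index_eq_card, Nat.card_eq_fintype_card]
  obtain ⟨R, dep, h1, h2, h3, h4⟩ := schreier_build H hS (H.index + 1)
  have hcov : ∀ g : G, ∃ a ∈ R, g * a⁻¹ ∈ H := by
    rcases h4 with h | h
    · exact h
    · exact absurd (hbound R h2) (by omega)
  -- R is a right transversal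
  have hR : IsComplement (H : Set G) (↑R : Set G) := by
    rw [isComplement_iff_existsUnique_mul_inv_mem]
    intro g
    obtain ⟨a, ha, hga⟩ := hcov g
    refine ⟨⟨a, ha⟩, hga, ?_⟩
    rintro ⟨b, hb⟩ hgb
    have : b * a⁻¹ ∈ H := by
      have : b * a⁻¹ = (g * b⁻¹)⁻¹ * (g * a⁻¹) := by group
      rw [this]; exact H.mul_mem (H.inv_mem hgb) hga
    exact Subtype.ext (h2 b hb a ha this)
  -- R.card = H.index
  have hcard : R.card = H.index := by
    refine le_antisymm (hbound R h2) ?_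
    have hsurj : Finset.univ ⊆ R.image (fun a : G => (Quotient.mk'' a :
        Quotient (QuotientGroup.rightRel H))) := by
      intro q _
      induction q using Quotient.inductionOn' with
      | h g =>
        obtain ⟨a, ha, hga⟩ := hcov g
        exact Finset.mem_image.mpr ⟨a, ha, Quotient.sound' (QuotientGroup.rightRel_apply.mpr hga)⟩
    calc H.index = Fintype.card (G ⧸ H) := by rw [index_eq_card, Nat.card_eq_fintype_card]
      _ = Fintype.card (Quotient (QuotientGroup.rightRel H)) :=
          (QuotientGroup.card_quotient_rightRel H).symm
      _ = Finset.univ.card := Finset.card_univ.symm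
      _ ≤ _ := Finset.card_le_card hsurj
      _ ≤ R.card := Finset.card_image_le
  set φ := hR.toRightFun with hφ
  -- membership in R means fixed by φ
  have hfix : ∀ g ∈ R, (φ g : G) = g := by
    intro g hg
    have h₁ : g * (φ g : G)⁻¹ ∈ H := hR.mul_inv_toRightFun_mem g
    exact h2 (φ g) (φ g).2 g hg (by simpa using H.inv_mem h₁)
  set f : G × G → ↥H := fun p =>
    ⟨p.1 * p.2 * (φ (p.1 * p.2) : G)⁻¹,
      hR.mul_inv_toRightFun_mem _⟩ with hf
  set T₀ : Finset ↥H := (R ×ˢ S).image f with hT₀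
  have hclT₀ : Subgroup.closure (T₀ : Set ↥H) = ⊤ := by
    have := Subgroup.closure_mul_image_eq_top (R := (R : Set G)) (S := (S : Set G)) hR h1 hS
    convert this using 2
    ext x
    simp only [hT₀, Finset.coe_image, Set.mem_image, Finset.mem_coe, Finset.mem_product,
      Set.mem_mul, Finset.coe_product]
    constructor
    · rintro ⟨⟨r, s⟩, ⟨hr, hs⟩, rfl⟩
      exact ⟨r * s, ⟨r, hr, s, hs, rfl⟩, rfl⟩
    · rintro ⟨g, ⟨r, hr, s, hs, rfl⟩, rfl⟩
      exact ⟨(r, s), ⟨hr, hs⟩, rfl⟩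
  set T : Finset ↥H := T₀.erase 1 with hT
  have hclT : Subgroup.closure (T : Set ↥H) = ⊤ := by
    rw [eq_top_iff, ← hclT₀, Subgroup.closure_le]
    intro x hx
    rcases eq_or_ne x 1 with rfl | hx1
    · exact Subgroup.one_mem _
    · refine Subgroup.subset_closure (Finset.mem_coe.mpr ?_)
      exact Finset.mem_erase.mpr ⟨hx1, Finset.mem_coe.mp hx⟩
  set P : Finset (G × G) := (R ×ˢ S).filter (fun p => p.1 * p.2 ∈ R) with hP
  -- T avoids the trivial generators
  have hTsub : T ⊆ ((R ×ˢ S) \ P).image f := by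
    intro x hx
    obtain ⟨hx1, hx0⟩ := Finset.mem_erase.mp hx
    obtain ⟨p, hp, rfl⟩ := Finset.mem_image.mp hx0
    refine Finset.mem_image.mpr ⟨p, Finset.mem_sdiff.mpr ⟨hp, ?_⟩, rfl⟩
    intro hpP
    have hmem : p.1 * p.2 ∈ R := (Finset.mem_filter.mp hpP).2
    refine hx1 (Subtype.ext ?_)
    simp only [hf]
    rw [hfix _ hmem, mul_inv_cancel, OneMemClass.coe_one]
  have hTcard : T.card + P.card ≤ H.index * S.card := by
    have hPsub : P ⊆ R ×ˢ S := Finset.filter_subset _ _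
    have := (Finset.card_le_card hTsub).trans Finset.card_image_le
    rw [Finset.card_sdiff_of_subset hPsub] at this
    have h5 : P.card ≤ (R ×ˢ S).card := Finset.card_le_card hPsub
    have h6 : (R ×ˢ S).card = H.index * S.card := by
      rw [Finset.card_product, hcard]
    omega
  -- injection from R.erase 1 into P
  have key : ∀ r : G, ∃ p : G × G, r ∈ R.erase 1 →
      p ∈ P ∧ ((p.1 * p.2 = r ∧ dep p.1 < dep r) ∨ (p.1 = r ∧ dep (p.1 * p.2) < dep r)) := by
    intro r
    by_cases hr : r ∈ R.erase 1
    · obtain ⟨hr1, hrR⟩ := Finset.mem_erase.mp hr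
      obtain ⟨a', ha', hda, s, hs, hedge⟩ := h3 r hrR hr1
      rcases hedge with h | h
      · refine ⟨(a', s), fun _ => ⟨?_, Or.inl ⟨h.symm, hda⟩⟩⟩
        exact Finset.mem_filter.mpr ⟨Finset.mem_product.mpr ⟨ha', hs⟩, h ▸ hrR⟩
      · refine ⟨(r, s), fun _ => ⟨?_, Or.inr ⟨rfl, ?_⟩⟩⟩
        · exact Finset.mem_filter.mpr ⟨Finset.mem_product.mpr ⟨hrR, hs⟩, h ▸ ha'⟩
        · simpa [← h] using hda
    · exact ⟨(1, 1), fun h => absurd h hr⟩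
  choose pf hpf using key
  have hPcard : (R.erase 1).card ≤ P.card := by
    refine Finset.card_le_card_of_injOn pf (fun r hr => (hpf r hr).1) ?_
    intro r₁ hr₁ r₂ hr₂ hpp
    rcases (hpf r₁ hr₁).2 with ⟨he₁, hd₁⟩ | ⟨he₁, hd₁⟩ <;>
      rcases (hpf r₂ hr₂).2 with ⟨he₂, hd₂⟩ | ⟨he₂, hd₂⟩
    · rw [← he₁, ← he₂, hpp]
    · exfalso; rw [hpp] at he₁ hd₁; rw [he₂] at hd₁; rw [he₁] at hd₂; omega
    · exfalso; rw [hpp] at he₁ hd₁; rw [he₂] at hd₁; rw [he₁] at hd₂; omega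
    · rw [← he₁, ← he₂, hpp]
  have hR1card : (R.erase 1).card = R.card - 1 := Finset.card_erase_of_mem h1
  have hRpos : 1 ≤ R.card := Finset.card_pos.mpr ⟨1, h1⟩
  refine ⟨T, ?_, hclT⟩
  set M := H.index * S.card with hM
  omega

end Schreier

/-- `minGens G` is `d(G)`, the minimal number of generators of the group `G`. -/
noncomputable def minGens (G : Type*) [Group G] : ℕ :=
  sInf {n : ℕ | ∃ S : Finset G, S.card = n ∧ Subgroup.closure (S : Set G) = ⊤}

theorem minGens_le {G : Type*} [Group G] {S : Finset G}
    (hS : Subgroup.closure (S : Set G) = ⊤) : minGens G ≤ S.card :=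
  Nat.sInf_le ⟨S, rfl, hS⟩

theorem minGens_spec {G : Type*} [Group G] (hFG : Group.FG G) :
    ∃ S : Finset G, S.card = minGens G ∧ Subgroup.closure (S : Set G) = ⊤ := by
  have hne : {n : ℕ | ∃ S : Finset G, S.card = n ∧ Subgroup.closure (S : Set G) = ⊤}.Nonempty := by
    obtain ⟨n, S, hc, hS⟩ := Group.fg_iff'.mp hFG
    exact ⟨n, S, hc, hS⟩
  exact Nat.sInf_mem hne

/-- **Lemma 2.1.** If `K ≤ H` are finite-index subgroups of a finitely generated group
`G`, then `(d(K) - 1)·[G : H] ≤ (d(H) - 1)·[G : K]`. -/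
theorem minGens_sub_one_div_index_antitone
    {G : Type*} [Group G] (hFG : Group.FG G) (H K : Subgroup G) (hKH : K ≤ H)
    (hH : H.FiniteIndex) (hK : K.FiniteIndex) :
    ((minGens ↥K : ℤ) - 1) * (H.index : ℤ) ≤ ((minGens ↥H : ℤ) - 1) * (K.index : ℤ) := by
  classical
  haveI := hFG
  haveI := hH
  haveI := hK
  haveI : Group.FG ↥H := Subgroup.fg_of_index_ne_zero H
  -- the subgroup K viewed inside H
  set K' : Subgroup ↥H := K.subgroupOf H with hK'
  haveI : K'.FiniteIndex := Subgroup.instFiniteIndex_subgroupOf K H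
  obtain ⟨S, hScard, hScl⟩ := minGens_spec (G := ↥H) inferInstance
  obtain ⟨T, hTle, hTcl⟩ := strong_schreier K' hScl
  -- transport T through the iso K' ≃* K
  set e : ↥K' ≃* ↥K := Subgroup.subgroupOfEquivOfLe hKH with he
  have hclimg : Subgroup.closure ((T.image e : Finset ↥K) : Set ↥K) = ⊤ := by
    have hmc := MonoidHom.map_closure e.toMonoidHom (T : Set ↥K')
    rw [hTcl, Subgroup.map_top_of_surjective e.toMonoidHom e.surjective] at hmc
    rw [Finset.coe_image]
    exact hmc.symm
  have hdK : minGens ↥K ≤ T.card :=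
    (minGens_le hclimg).trans Finset.card_image_le
  -- index bookkeeping
  have hrel : K'.index * H.index = K.index := Subgroup.relIndex_mul_index hKH
  have hnat : minGens ↥K + K'.index ≤ K'.index * minGens ↥H + 1 := by
    rw [← hScard]; omega
  have hIndH : (0:ℤ) ≤ (H.index : ℤ) := Int.natCast_nonneg _
  have h1 : ((minGens ↥K : ℤ) - 1) ≤ ((minGens ↥H : ℤ) - 1) * (K'.index : ℤ) := by
    have := (Nat.cast_le (α := ℤ)).mpr hnat
    push_cast at this ⊢
    nlinarith [this]
  calc ((minGens ↥K : ℤ) - 1) * (H.index : ℤ)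
      ≤ ((minGens ↥H : ℤ) - 1) * (K'.index : ℤ) * (H.index : ℤ) :=
        mul_le_mul_of_nonneg_right h1 hIndH
    _ = ((minGens ↥H : ℤ) - 1) * (K.index : ℤ) := by
        rw [mul_assoc, ← Nat.cast_mul, hrel]
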